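/- For every p ∈ ℝⁿ there exist a unique constant c_ε(p) and a constant K > 0 depending only on the Lipschitz norm of g (and on n) such that |v^ε(x,t) − p·x − c_ε(p) t| ≤ K for all x ∈ ℝⁿ and t ≥ 0; moreover 0 ≤ c_ε(p) ≤ ε^{1−α} ‖g‖_∞, and c_ε(p) > 0 whenever g(s) < 0 for all s. -/

import Mathlib

open Filter Set Topology



/-- The (coordinate) Laplacian of a function on `ℝⁿ`. -/
noncomputable def lap {n : ℕ} (f : EuclideanSpace ℝ (Fin n) → ℝ)
    (x : EuclideanSpace ℝ (Fin n)) : ℝ :=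
  ∑ i, fderiv ℝ (fun y => fderiv ℝ f y (EuclideanSpace.single i 1)) x
    (EuclideanSpace.single i 1)

variable {n : ℕ}

local notation "E" => EuclideanSpace ℝ (Fin n)

lemma diff_fderiv_apply {f : E → ℝ} (hf : ContDiff ℝ 2 f) (e : E) :
    Differentiable ℝ fun y => fderiv ℝ f y e := by
  have h : ContDiff ℝ 1 (fderiv ℝ f) := hf.fderiv_right (by norm_num)
  exact (h.differentiable one_ne_zero).clm_apply (differentiable_const e)

lemma slice_hasDerivAt {f : E → ℝ} (hf : Differentiable ℝ f) (x e : E) (s : ℝ) :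
    HasDerivAt (fun r : ℝ => f (x + r • e)) (fderiv ℝ f (x + s • e) e) s := by
  have hline : HasDerivAt (fun r : ℝ => x + r • e) e s := by
    simpa using ((hasDerivAt_id s).smul_const e).const_add x
  exact (hf (x + s • e)).hasFDerivAt.comp_hasDerivAt s hline

lemma second_slice {f : E → ℝ} (hf : ContDiff ℝ 2 f) (x e : E) :
    HasDerivAt (fun s : ℝ => fderiv ℝ f (x + s • e) e)
      (fderiv ℝ (fun y => fderiv ℝ f y e) x e) 0 := by
  have h1 : Differentiable ℝ (fun y => fderiv ℝ f y e) := diff_fderiv_apply hf e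
  have hline : HasDerivAt (fun r : ℝ => x + r • e) e 0 := by
    simpa using ((hasDerivAt_id (0:ℝ)).smul_const e).const_add x
  have := (h1 (x + (0:ℝ) • e)).hasFDerivAt.comp_hasDerivAt 0 hline
  simpa [Function.comp_def] using this




lemma lap_sub {f g : E → ℝ} (hf : ContDiff ℝ 2 f) (hg : ContDiff ℝ 2 g) (x : E) :
    lap (fun y => f y - g y) x = lap f x - lap g x := by
  unfold lap
  rw [← Finset.sum_sub_distrib]
  refine Finset.sum_congr rfl fun i _ => ?_
  set e := EuclideanSpace.single (𝕜 := ℝ) i (1:ℝ)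
  have hf1 : Differentiable ℝ f := hf.differentiable two_ne_zero
  have hg1 : Differentiable ℝ g := hg.differentiable two_ne_zero
  have key : (fun y => fderiv ℝ (fun z => f z - g z) y e)
      = fun y => fderiv ℝ f y e - fderiv ℝ g y e := by
    funext y
    rw [fderiv_fun_sub (hf1 y) (hg1 y)]
    rfl
  rw [key, fderiv_fun_sub (diff_fderiv_apply hf e x) (diff_fderiv_apply hg e x)]
  rfl

lemma lap_const_mul {f : E → ℝ} (hf : ContDiff ℝ 2 f) (a : ℝ) (x : E) :
    lap (fun y => a * f y) x = a * lap f x := by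
  unfold lap
  rw [Finset.mul_sum]
  refine Finset.sum_congr rfl fun i _ => ?_
  set e := EuclideanSpace.single (𝕜 := ℝ) i (1:ℝ)
  have hf1 : Differentiable ℝ f := hf.differentiable two_ne_zero
  have key : (fun y => fderiv ℝ (fun z => a * f z) y e)
      = fun y => a * fderiv ℝ f y e := by
    funext y
    rw [fderiv_const_mul (hf1 y)]
    rfl
  rw [key, fderiv_const_mul (diff_fderiv_apply hf e x)]
  rfl

lemma lap_const (c : ℝ) (x : E) : lap (fun _ => c) x = 0 := by
  unfold lap
  refine Finset.sum_eq_zero fun i _ => ?_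
  have key : (fun y : E => fderiv ℝ (fun _ : E => c) y (EuclideanSpace.single i 1))
      = fun _ => (0:ℝ) := by
    funext y; rw [fderiv_const_apply]; rfl
  rw [key, fderiv_const_apply]; rfl

lemma lap_sub_const {f : E → ℝ} (hf : ContDiff ℝ 2 f) (c : ℝ) (x : E) :
    lap (fun y => f y - c) x = lap f x := by
  rw [lap_sub hf contDiff_const, lap_const, sub_zero]

lemma lap_comp_add {f : E → ℝ} (hf : ContDiff ℝ 2 f) (z x : E) :
    lap (fun y => f (y + z)) x = lap f (x + z) := by
  have hf1 : Differentiable ℝ f := hf.differentiable two_ne_zero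
  have hshift : ∀ (u : E → ℝ), Differentiable ℝ u → ∀ y : E,
      fderiv ℝ (fun w => u (w + z)) y = fderiv ℝ u (y + z) := by
    intro u hu y
    have h1 : HasFDerivAt (fun w : E => w + z) (ContinuousLinearMap.id ℝ E) y :=
      (hasFDerivAt_id y).add_const z
    have := ((hu (y + z)).hasFDerivAt.comp y h1)
    simpa [Function.comp_def] using this.fderiv
  unfold lap
  refine Finset.sum_congr rfl fun i _ => ?_
  set e := EuclideanSpace.single (𝕜 := ℝ) i (1:ℝ)
  have key : (fun y => fderiv ℝ (fun w => f (w + z)) y e)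
      = fun y => (fun w => fderiv ℝ f w e) (y + z) := by
    funext y; rw [hshift f hf1 y]
  rw [key, hshift (fun w => fderiv ℝ f w e) (diff_fderiv_apply hf e)]



lemma lap_clm (l : E →L[ℝ] ℝ) (x : E) : lap (fun y => l y) x = 0 := by
  unfold lap
  refine Finset.sum_eq_zero fun i _ => ?_
  set e := EuclideanSpace.single (𝕜 := ℝ) i (1:ℝ)
  have key : (fun y : E => fderiv ℝ (fun w => l w) y e) = fun _ => l e := by
    funext y
    rw [show (fun w => l w) = ⇑l from rfl, l.fderiv]
  rw [key, fderiv_const_apply]; rfl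

/-- the linear form `y ↦ ∑ i, p i * y i` as a CLM -/
noncomputable def pform (p : E) : E →L[ℝ] ℝ := ∑ i, p i • EuclideanSpace.proj (𝕜 := ℝ) i

lemma pform_apply (p y : E) : pform p y = ∑ i, p i * y i := by
  simp [pform, ContinuousLinearMap.sum_apply]

lemma lap_pform (p x : E) : lap (fun y => ∑ i, p i * y i) x = 0 := by
  have : (fun y : E => ∑ i, p i * y i) = fun y => pform p y := by
    funext y; rw [pform_apply]
  rw [this, lap_clm]

lemma pform_contDiff (p : E) : ContDiff ℝ 2 (fun y : E => ∑ i, p i * y i) := by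
  have : (fun y : E => ∑ i, p i * y i) = fun y => pform p y := by
    funext y; rw [pform_apply]
  rw [this]; exact (pform p).contDiff

noncomputable def Phi : E → ℝ := fun y => ∑ i, (y i)^2

lemma Phi_contDiff : ContDiff ℝ 2 (Phi (n := n)) := by
  unfold Phi
  exact ContDiff.sum fun i _ => ((EuclideanSpace.proj (𝕜 := ℝ) i).contDiff).pow 2

lemma Phi_nonneg (x : E) : 0 ≤ Phi x := Finset.sum_nonneg fun i _ => sq_nonneg _

lemma Phi_eq_norm_sq (x : E) : Phi x = ‖x‖^2 := by
  rw [EuclideanSpace.norm_eq, Real.sq_sqrt (Finset.sum_nonneg fun i _ => by positivity)]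
  unfold Phi
  exact Finset.sum_congr rfl fun i _ => by rw [Real.norm_eq_abs, sq_abs]

lemma Phi_hasFDerivAt (y : E) :
    HasFDerivAt (Phi (n := n)) (∑ i, (2 * y i) • EuclideanSpace.proj (𝕜 := ℝ) i) y := by
  unfold Phi
  refine HasFDerivAt.fun_sum fun i _ => ?_
  have h := ((EuclideanSpace.proj (𝕜 := ℝ) i).hasFDerivAt (x := y)).mul
    ((EuclideanSpace.proj (𝕜 := ℝ) i).hasFDerivAt (x := y))
  have h2 : (fun y : E => y i ^ 2) = fun y : E => (EuclideanSpace.proj (𝕜 := ℝ) i) y * (EuclideanSpace.proj (𝕜 := ℝ) i) y := by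
    funext w; simp [sq]
  rw [h2]
  refine h.congr_fderiv ?_
  rw [two_mul, add_smul]
  rfl

lemma fderiv_Phi_apply (y e : E) : fderiv ℝ (Phi (n := n)) y e = ∑ i, 2 * y i * e i := by
  rw [(Phi_hasFDerivAt y).fderiv]
  simp [ContinuousLinearMap.sum_apply, mul_assoc]

lemma lap_Phi (x : E) : lap (Phi (n := n)) x = 2 * n := by
  unfold lap
  have key : ∀ j : Fin n, fderiv ℝ (fun y => fderiv ℝ (Phi (n := n)) y (EuclideanSpace.single j 1)) x
      (EuclideanSpace.single j 1) = 2 := by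
    intro j
    set e := EuclideanSpace.single (𝕜 := ℝ) j (1:ℝ) with he
    have k1 : (fun y : E => fderiv ℝ (Phi (n := n)) y e) = fun y => ∑ i, (2 * e i) • (EuclideanSpace.proj (𝕜 := ℝ) i) y := by
      funext y; rw [fderiv_Phi_apply]
      refine Finset.sum_congr rfl fun i _ => ?_
      simp [mul_comm, mul_assoc, mul_left_comm]
    have k2 : HasFDerivAt (fun y : E => ∑ i, (2 * e i) • (EuclideanSpace.proj (𝕜 := ℝ) i) y)
        (∑ i, (2 * e i) • EuclideanSpace.proj (𝕜 := ℝ) i) x := by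
      refine HasFDerivAt.fun_sum fun i _ => ?_
      exact ((EuclideanSpace.proj (𝕜 := ℝ) i).hasFDerivAt (x := x)).const_smul (2 * e i)
    rw [k1, k2.fderiv]
    have : ∀ i : Fin n, e i = if i = j then 1 else 0 := by
      intro i; rw [he]; rw [EuclideanSpace.single_apply]
    simp [ContinuousLinearMap.sum_apply, this, Finset.sum_ite_eq]
  rw [Finset.sum_congr rfl fun j _ => key j]
  simp [Finset.sum_const, mul_comm]



lemma deriv_nonneg_of_isMaxOn {φ : ℝ → ℝ} {t₀ T : ℝ} (h0 : 0 < t₀) (hT : t₀ ≤ T)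
    (hd : DifferentiableAt ℝ φ t₀) (hm : ∀ t ∈ Set.Icc (0:ℝ) T, φ t ≤ φ t₀) :
    0 ≤ deriv φ t₀ := by
  have h := hd.hasDerivAt
  rw [hasDerivAt_iff_tendsto_slope] at h
  have h' : Tendsto (slope φ t₀) (𝓝[<] t₀) (𝓝 (deriv φ t₀)) :=
    h.mono_left (nhdsWithin_mono _ fun x hx => ne_of_lt hx)
  refine ge_of_tendsto h' ?_
  filter_upwards [Ioo_mem_nhdsLT h0] with t ht
  have hnum : φ t - φ t₀ ≤ 0 := sub_nonpos.2 (hm t ⟨le_of_lt ht.1, le_trans (le_of_lt ht.2) hT⟩)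
  have hden : t - t₀ < 0 := sub_neg.2 ht.2
  rw [slope_def_field]
  exact div_nonneg_of_nonpos hnum (le_of_lt hden)

lemma second_deriv_test {φ φ' : ℝ → ℝ} {m : ℝ}
    (hd : ∀ s, HasDerivAt φ (φ' s) s) (h2 : HasDerivAt φ' m 0)
    (hmax : IsLocalMax φ 0) : m ≤ 0 := by
  by_contra hm
  push_neg at hm
  have hφ'0 : φ' 0 = 0 := by
    have := hmax.deriv_eq_zero
    rwa [(hd 0).deriv] at this
  -- slope of φ' tends to m > 0, so φ' > 0 just right of 0
  have hs := h2
  rw [hasDerivAt_iff_tendsto_slope] at hs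
  have hs' : Tendsto (slope φ' 0) (𝓝[>] 0) (𝓝 m) :=
    hs.mono_left (nhdsWithin_mono _ fun x hx => ne_of_gt hx)
  have hev : ∀ᶠ s in 𝓝[>] (0:ℝ), 0 < slope φ' 0 s :=
    hs'.eventually (eventually_gt_nhds hm)
  have hev2 : ∀ᶠ s in 𝓝[>] (0:ℝ), 0 < φ' s := by
    filter_upwards [hev, self_mem_nhdsWithin] with s hsl hspos
    rw [slope_def_field, hφ'0, sub_zero, sub_zero] at hsl
    have : (0:ℝ) < s := hspos
    have := mul_pos hsl this
    rw [div_mul_cancel₀] at this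
    · exact this
    · exact ne_of_gt hspos
  obtain ⟨ρ, hρpos, hρ⟩ := (mem_nhdsGT_iff_exists_Ioo_subset).1 hev2
  -- local max: φ ≤ φ 0 near 0
  obtain ⟨ρ₂, hρ₂pos, hρ₂⟩ := Metric.eventually_nhds_iff_ball.1 hmax
  set σ := min ρ ρ₂ / 2 with hσ
  have hσpos : 0 < σ := by
    have := lt_min hρpos hρ₂pos
    simp only [hσ]; linarith
  have hσρ : σ < ρ := by
    have := min_le_left ρ ρ₂; simp only [hσ]; linarith [min_le_left ρ ρ₂]
  have hσρ₂ : σ < ρ₂ := by simp only [hσ]; linarith [min_le_right ρ ρ₂]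
  have hmono : StrictMonoOn φ (Set.Icc 0 σ) := by
    refine strictMonoOn_of_deriv_pos (convex_Icc 0 σ) ?_ ?_
    · exact (fun s _ => ((hd s).differentiableAt).continuousAt.continuousWithinAt)
    · intro s hs
      rw [interior_Icc] at hs
      rw [(hd s).deriv]
      exact hρ ⟨hs.1, lt_trans hs.2 hσρ⟩ |>.le.lt_of_ne' (ne_of_gt (hρ ⟨hs.1, lt_trans hs.2 hσρ⟩))
  have hlt : φ 0 < φ σ := hmono ⟨le_refl 0, hσpos.le⟩ ⟨hσpos.le, le_refl σ⟩ hσpos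
  have hle : φ σ ≤ φ 0 := by
    apply hρ₂
    rw [Metric.mem_ball, Real.dist_eq, sub_zero, abs_of_pos hσpos]
    exact hσρ₂
  linarith



lemma quasi_linear (f : ℝ → ℝ) (C : ℝ) (hC : 0 ≤ C)
    (hadd : ∀ s t : ℝ, 0 < s → 0 < t → |f (s + t) - f s - f t| ≤ C)
    (hpos : ∀ t, 0 < t → 0 ≤ f t) :
    ∃ c, 0 ≤ c ∧ ∀ t, 0 < t → |f t - c * t| ≤ C := by
  classical
  set a : ℝ → ℕ → ℝ := fun t k => f (2 ^ k * t) / 2 ^ k with ha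
  have hstep : ∀ t, 0 < t → ∀ k : ℕ, dist (a t k) (a t (k+1)) ≤ (C/2) * (1/2)^k := by
    intro t ht k
    have h2k : (0:ℝ) < 2 ^ k * t := by positivity
    have hb := hadd (2^k*t) (2^k*t) h2k h2k
    have heq : (2:ℝ)^k * t + 2^k*t = 2^(k+1)*t := by ring
    rw [heq] at hb
    rw [Real.dist_eq, ha]
    have e1 : f (2^k*t)/(2:ℝ)^k - f (2^(k+1)*t)/2^(k+1)
        = -((f (2^(k+1)*t) - f (2^k*t) - f (2^k*t)) / 2^(k+1)) := by
      field_simp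
      ring
    simp only []
    rw [e1, abs_neg, abs_div, abs_of_pos (show (0:ℝ) < 2^(k+1) by positivity)]
    have hrr : C/2*(1/2:ℝ)^k = C / 2^(k+1) := by
      rw [div_pow, one_pow, pow_succ]
      ring
    rw [hrr]
    exact div_le_div_of_nonneg_right hb (show (0:ℝ) < 2^(k+1) by positivity).le
  have hcauchy : ∀ t, 0 < t → CauchySeq (a t) := fun t ht =>
    cauchySeq_of_le_geometric (1/2) (C/2) (by norm_num) (hstep t ht)
  set lam : ℝ → ℝ := fun t => limUnder atTop (a t) with hlam
  have hlim : ∀ t, 0 < t → Tendsto (a t) atTop (𝓝 (lam t)) := fun t ht =>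
    (hcauchy t ht).tendsto_limUnder
  have hfl : ∀ t, 0 < t → |f t - lam t| ≤ C := by
    intro t ht
    have := dist_le_of_le_geometric_of_tendsto₀ (1/2) (C/2) (by norm_num)
      (hstep t ht) (hlim t ht)
    rw [Real.dist_eq] at this
    have ha0 : a t 0 = f t := by simp [ha]
    rw [ha0] at this
    calc |f t - lam t| ≤ C/2/(1-1/2) := this
    _ = C := by ring
  have hlamadd : ∀ s t : ℝ, 0 < s → 0 < t → lam (s+t) = lam s + lam t := by
    intro s t hs ht
    have hdiff : Tendsto (fun k => a (s+t) k - a s k - a t k) atTop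
        (𝓝 (lam (s+t) - lam s - lam t)) := ((hlim _ (by linarith)).sub (hlim s hs)).sub (hlim t ht)
    have habs : ∀ k : ℕ, |a (s+t) k - a s k - a t k| ≤ C * (1/2)^k := by
      intro k
      have h2 : (0:ℝ) < 2^k := by positivity
      have e1 : a (s+t) k - a s k - a t k
          = (f (2^k*s + 2^k*t) - f (2^k*s) - f (2^k*t)) / 2^k := by
        simp only [ha]
        rw [mul_add]
        field_simp
      rw [e1, abs_div, abs_of_pos h2, div_le_iff₀ h2]
      calc |f (2^k*s + 2^k*t) - f (2^k*s) - f (2^k*t)| ≤ C :=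
        hadd _ _ (by positivity) (by positivity)
      _ = C * (1/2)^k * 2^k := by
          rw [div_pow, one_pow]
          field_simp
    have hgeom : Tendsto (fun k : ℕ => C * (1/2:ℝ)^k) atTop (𝓝 0) := by
      have := tendsto_pow_atTop_nhds_zero_of_lt_one (show (0:ℝ) ≤ 1/2 by norm_num)
        (show (1/2:ℝ) < 1 by norm_num)
      simpa using this.const_mul C
    have : |lam (s+t) - lam s - lam t| ≤ 0 :=
      le_of_tendsto_of_tendsto' hdiff.abs hgeom habs
    have h0 : lam (s+t) - lam s - lam t = 0 := abs_nonpos_iff.1 this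
    linarith
  have hlamnn : ∀ t, 0 < t → 0 ≤ lam t := by
    intro t ht
    refine ge_of_tendsto (hlim t ht) (Eventually.of_forall fun k => ?_)
    have : 0 ≤ f (2^k * t) := hpos _ (by positivity)
    have h2 : (0:ℝ) < 2^k := by positivity
    exact div_nonneg this h2.le
  have hmono : ∀ u w : ℝ, 0 < u → u ≤ w → lam u ≤ lam w := by
    intro u w hu huw
    rcases eq_or_lt_of_le huw with h | h
    · rw [h]
    · have := hlamadd u (w - u) hu (by linarith)
      have h2 := hlamnn (w - u) (by linarith)
      have e : u + (w - u) = w := by ring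
      rw [e] at this
      linarith
  have hnat : ∀ k : ℕ, ∀ t : ℝ, 0 < t → lam ((k+1) * t) = (k+1) * lam t := by
    intro k
    induction k with
    | zero => intro t ht; norm_num
    | succ m ih =>
      intro t ht
      have e : ((m+1+1 : ℕ) : ℝ) * t = ((m+1:ℕ):ℝ) * t + t := by push_cast; ring
      push_cast
      push_cast at ih
      rw [show ((m:ℝ)+1+1) * t = ((m:ℝ)+1) * t + t by ring,
        hlamadd _ t (by positivity) ht, ih t ht]
      ring
  have hnat' : ∀ k : ℕ, 1 ≤ k → ∀ t : ℝ, 0 < t → lam (k * t) = k * lam t := by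
    intro k hk t ht
    obtain ⟨m, rfl⟩ := Nat.exists_eq_add_of_le hk
    have := hnat m t ht
    push_cast at this ⊢
    rw [show (1:ℝ) + m = m + 1 by ring]
    exact this
  set c := lam 1 with hc
  have hrat : ∀ m k : ℕ, 1 ≤ m → 1 ≤ k → lam ((m:ℝ)/k) = (m:ℝ)/k * c := by
    intro m k hm hk
    have hkpos : (0:ℝ) < k := by exact_mod_cast hk
    have hmpos : (0:ℝ) < m := by exact_mod_cast hm
    have ht : (0:ℝ) < (m:ℝ)/k := by positivity
    have h1 : lam ((k:ℝ) * ((m:ℝ)/k)) = k * lam ((m:ℝ)/k) := hnat' k hk _ ht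
    have h2 : (k:ℝ) * ((m:ℝ)/k) = m := by field_simp
    rw [h2] at h1
    have h3 : lam ((m:ℝ)) = m * c := by
      have := hnat' m hm 1 one_pos
      simpa [hc] using this
    rw [h3] at h1
    field_simp
    rw [h1]
  have hlin : ∀ t : ℝ, 0 < t → lam t = c * t := by
    intro t ht
    have hcnn : 0 ≤ c := hlamnn 1 one_pos
    have hle : lam t ≤ c * t := by
      by_contra hl
      push_neg at hl
      set d := lam t - c * t with hd
      have hdpos : 0 < d := by simp only [hd]; linarith
      obtain ⟨j, hj⟩ := exists_nat_gt (max 1 (c / d))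
      have hj1 : 1 ≤ j := by
        have := le_max_left 1 (c/d)
        have : (1:ℝ) < j := lt_of_le_of_lt (le_max_left 1 (c/d)) hj
        exact_mod_cast this.le
      have hjpos : (0:ℝ) < j := by exact_mod_cast hj1
      set m := ⌈(j:ℝ) * t⌉₊ with hm
      have hm1 : 1 ≤ m := by
        rw [hm, Nat.one_le_ceil_iff]
        positivity
      have htm : t ≤ (m:ℝ)/j := by
        rw [le_div_iff₀ hjpos, mul_comm]
        exact Nat.le_ceil _
      have hmt : (m:ℝ)/j ≤ t + 1/j := by
        rw [div_le_iff₀ hjpos]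
        have := (Nat.ceil_lt_add_one (show (0:ℝ) ≤ j*t by positivity)).le
        calc (m:ℝ) ≤ j*t + 1 := this
        _ = (t + 1/j) * j := by field_simp
      have : lam t ≤ lam ((m:ℝ)/j) := hmono t _ ht htm
      rw [hrat m j hm1 hj1] at this
      have : lam t ≤ (t + 1/j) * c := by
        calc lam t ≤ (m:ℝ)/j * c := this
        _ ≤ (t + 1/j) * c := by
            apply mul_le_mul_of_nonneg_right hmt hcnn
      have hcj : c / d < j := lt_of_le_of_lt (le_max_right 1 (c/d)) hj
      have hfin : c / j < d := by
        rw [div_lt_iff₀ hjpos]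
        calc c = (c/d) * d := by field_simp
        _ < ↑j * d := mul_lt_mul_of_pos_right hcj hdpos
        _ = d * ↑j := by ring
      have e2 : (t + 1/(j:ℝ)) * c = c * t + c/j := by ring
      rw [e2] at this
      simp only [hd] at hfin
      linarith
    have hge : c * t ≤ lam t := by
      by_contra hl
      push_neg at hl
      set d := c * t - lam t with hd
      have hdpos : 0 < d := by simp only [hd]; linarith
      obtain ⟨j, hj⟩ := exists_nat_gt (max (1/t) (max 1 (c / d)))
      have hj1 : 1 ≤ j := by
        have : (1:ℝ) < j := lt_of_le_of_lt (le_trans (le_max_left 1 (c/d)) (le_max_right (1/t) _)) hj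
        exact_mod_cast this.le
      have hjpos : (0:ℝ) < j := by exact_mod_cast hj1
      have hjt : 1/t < j := lt_of_le_of_lt (le_max_left (1/t) _) hj
      have hjt1 : 1 < (j:ℝ) * t := by
        rw [div_lt_iff₀ ht] at hjt
        linarith [hjt]
      set m := ⌊(j:ℝ) * t⌋₊ with hm
      have hm1 : 1 ≤ m := by
        rw [hm]
        exact Nat.le_floor (by push_cast; linarith)
      have htm : (m:ℝ)/j ≤ t := by
        rw [div_le_iff₀ hjpos, mul_comm]
        exact Nat.floor_le (by positivity)
      have hmt : t - 1/j ≤ (m:ℝ)/j := by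
        rw [le_div_iff₀ hjpos]
        have := (Nat.lt_floor_add_one ((j:ℝ)*t)).le
        calc (t - 1/j) * j = j * t - 1 := by field_simp
        _ ≤ (m:ℝ) := by linarith [Nat.lt_floor_add_one ((j:ℝ)*t)]
      have hmpos : (0:ℝ) < (m:ℝ)/j := by
        have : (0:ℝ) < m := by exact_mod_cast hm1
        positivity
      have h5 : lam ((m:ℝ)/j) ≤ lam t := hmono _ t hmpos htm
      rw [hrat m j hm1 hj1] at h5
      have h6 : (t - 1/j) * c ≤ lam t := by
        calc (t - 1/j) * c ≤ (m:ℝ)/j * c := mul_le_mul_of_nonneg_right hmt hcnn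
        _ ≤ lam t := h5
      have hcj : c / d < j := lt_of_le_of_lt (le_trans (le_max_right 1 (c/d)) (le_max_right (1/t) _)) hj
      have hfin : c / j < d := by
        rw [div_lt_iff₀ hjpos]
        calc c = (c/d) * d := by field_simp
        _ < ↑j * d := mul_lt_mul_of_pos_right hcj hdpos
        _ = d * ↑j := by ring
      have e2 : (t - 1/(j:ℝ)) * c = c * t - c/j := by ring
      rw [e2] at h6
      simp only [hd] at hfin
      linarith
    linarith
  refine ⟨c, hlamnn 1 one_pos, fun t ht => ?_⟩
  have := hfl t ht
  rw [hlin t ht] at this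
  exact this

lemma lap_add_const {f : E → ℝ} (hf : ContDiff ℝ 2 f) (c : ℝ) (x : E) :
    lap (fun y => f y + c) x = lap f x := by
  have : (fun y => f y + c) = fun y => f y - (-c) := by funext y; ring
  rw [this, lap_sub_const hf]

lemma ell_add (p x z : E) :
    (∑ i, p i * (x + z) i) = (∑ i, p i * x i) + ∑ i, p i * z i := by
  rw [← Finset.sum_add_distrib]
  refine Finset.sum_congr rfl fun i _ => ?_
  have h : (x + z) i = x i + z i := rfl
  rw [h]; ring

lemma ell_neg (p x : E) : (∑ i, p i * (-x) i) = -∑ i, p i * x i := by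
  rw [← Finset.sum_neg_distrib]
  refine Finset.sum_congr rfl fun i _ => ?_
  have h : (-x) i = -(x i) := rfl
  rw [h]; ring

lemma ell_zero (p : E) : (∑ i, p i * (0:E) i) = 0 := by
  refine Finset.sum_eq_zero fun i _ => ?_
  have h : (0:E) i = 0 := rfl
  rw [h, mul_zero]
set_option maxHeartbeats 1000000 in
lemma comparison
    (d : E → ℝ → ℝ) (L' : ℝ) (hL' : 0 ≤ L')
    (hc : ContinuousOn (fun q : E × ℝ => d q.1 q.2) {q | 0 ≤ q.2})
    (hcd : ∀ t, 0 < t → ContDiff ℝ 2 fun x => d x t)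
    (htd : ∀ x t, 0 < t → DifferentiableAt ℝ (d x) t)
    (hb : ∀ T, 0 < T → ∃ B, ∀ x t, 0 ≤ t → t ≤ T → d x t ≤ B)
    (h0 : ∀ x, d x 0 ≤ 0)
    (hineq : ∀ x t, 0 < t → 0 ≤ d x t →
      deriv (d x) t - lap (fun y => d y t) x ≤ L' * d x t) :
    ∀ x t, 0 ≤ t → d x t ≤ 0 := by
  by_contra hcon
  push_neg at hcon
  obtain ⟨x₁, T, hT0, hdpos⟩ := hcon
  have hTpos : 0 < T := by
    rcases eq_or_lt_of_le hT0 with h | h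
    · exfalso; rw [← h] at hdpos; exact absurd (h0 x₁) (not_le.2 hdpos)
    · exact h
  set κ := L' + 1 with hκ
  have hκpos : 0 < κ := by simp only [hκ]; linarith
  obtain ⟨B, hB⟩ := hb T hTpos
  set B' := max B 1 with hB'
  have hB'pos : (0:ℝ) < B' := lt_of_lt_of_le one_pos (le_max_right _ _)
  have hBd : ∀ x t, 0 ≤ t → t ≤ T → d x t ≤ B' :=
    fun x t h1 h2 => le_trans (hB x t h1 h2) (le_max_left _ _)
  set a := Real.exp (-κ * T) * d x₁ T with ha2
  have hapos : 0 < a := mul_pos (Real.exp_pos _) hdpos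
  have hdenpos : 0 < Phi x₁ + (2*(n:ℝ)+1)*T + 1 := by
    have := Phi_nonneg (n := n) x₁
    have h2 : (0:ℝ) ≤ 2*(n:ℝ)+1 := by positivity
    nlinarith
  set δ := a / (2 * (Phi x₁ + (2*(n:ℝ)+1)*T + 1)) with hδ
  have hδpos : 0 < δ := by
    apply div_pos hapos
    linarith
  set ψ := fun (x : E) (t : ℝ) => Real.exp (-κ * t) * d x t - (δ * Phi x + (2*(n:ℝ)*δ + δ) * t)
    with hψ
  have hc2pos : 0 < 2*(n:ℝ)*δ + δ := by positivity
  have hψx₁ : 0 < ψ x₁ T := by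
    have key : δ * Phi x₁ + (2*(n:ℝ)*δ + δ) * T ≤ a / 2 := by
      have e1 : δ * Phi x₁ + (2*(n:ℝ)*δ + δ) * T = δ * (Phi x₁ + (2*(n:ℝ)+1)*T) := by ring
      rw [e1, hδ]
      rw [div_mul_eq_mul_div, div_le_div_iff₀ (by linarith) (by norm_num)]
      have hnn : 0 ≤ Phi x₁ + (2*(n:ℝ)+1)*T := by
        have := Phi_nonneg (n := n) x₁
        have h2 : (0:ℝ) ≤ 2*(n:ℝ)+1 := by positivity
        nlinarith
      nlinarith
    have : a / 2 < a := by linarith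
    simp only [hψ]
    rw [← ha2]
    linarith
  set R := Real.sqrt (2*B'/δ) + ‖x₁‖ + 1 with hR
  have hsq : 0 ≤ Real.sqrt (2*B'/δ) := Real.sqrt_nonneg _
  have hRx₁ : ‖x₁‖ < R := by simp only [hR]; linarith [norm_nonneg x₁]
  have hRpos : 0 < R := lt_of_le_of_lt (norm_nonneg x₁) hRx₁
  have hR2 : 2*B'/δ ≤ R^2 := by
    have h1 : Real.sqrt (2*B'/δ) ≤ R := by simp only [hR]; linarith [norm_nonneg x₁]
    calc 2*B'/δ = Real.sqrt (2*B'/δ)^2 := (Real.sq_sqrt (by positivity)).symm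
    _ ≤ R^2 := by nlinarith
  set S := (Metric.closedBall (0:E) R) ×ˢ (Icc (0:ℝ) T) with hS
  have hScomp : IsCompact S := (isCompact_closedBall _ _).prod isCompact_Icc
  have hSne : ((x₁, T) : E × ℝ) ∈ S := by
    constructor
    · simp only [Metric.mem_closedBall, dist_zero_right]; exact hRx₁.le
    · exact ⟨hTpos.le, le_refl T⟩
  have hSsub : S ⊆ {q : E × ℝ | 0 ≤ q.2} := fun q hq => hq.2.1
  have hψcont : ContinuousOn (fun q : E × ℝ => ψ q.1 q.2) S := by
    simp only [hψ]
    apply ContinuousOn.sub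
    · apply ContinuousOn.mul
      · exact ((Real.continuous_exp.comp (continuous_const.mul continuous_snd)).continuousOn)
      · exact hc.mono hSsub
    · apply Continuous.continuousOn
      exact ((continuous_const.mul (Phi_contDiff.continuous.comp continuous_fst)).add
        (continuous_const.mul continuous_snd))
  obtain ⟨⟨x₀, t₀⟩, hq₀S, hq₀max⟩ := hScomp.exists_isMaxOn ⟨(x₁,T), hSne⟩ hψcont
  have hmax : ∀ q : E × ℝ, q ∈ S → ψ q.1 q.2 ≤ ψ x₀ t₀ := fun q hq => hq₀max hq
  have hx₀mem : ‖x₀‖ ≤ R := by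
    have := hq₀S.1
    simpa only [Metric.mem_closedBall, dist_zero_right] using this
  have ht₀mem : t₀ ∈ Icc (0:ℝ) T := hq₀S.2
  have hψ0pos : 0 < ψ x₀ t₀ := lt_of_lt_of_le hψx₁ (hmax (x₁, T) hSne)
  have hexp_le_one : ∀ t : ℝ, 0 ≤ t → Real.exp (-κ * t) ≤ 1 := by
    intro t htn
    calc Real.exp (-κ * t) ≤ Real.exp 0 := Real.exp_le_exp.2 (by nlinarith)
    _ = 1 := Real.exp_zero
  have ht₀pos : 0 < t₀ := by
    rcases eq_or_lt_of_le ht₀mem.1 with h | h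
    · exfalso
      have h1 : ψ x₀ t₀ ≤ 0 := by
        simp only [hψ, ← h]
        have h1 : Real.exp (-κ * 0) * d x₀ 0 ≤ 0 := by
          simp only [mul_zero, neg_zero, Real.exp_zero, one_mul]
          exact h0 x₀
        have h2 : 0 ≤ δ * Phi x₀ + (2*(n:ℝ)*δ + δ) * 0 := by
          simp only [mul_zero, add_zero]
          exact mul_nonneg hδpos.le (Phi_nonneg x₀)
        linarith
      linarith
    · exact h
  have hexpd_le : ∀ x t, 0 ≤ t → t ≤ T → Real.exp (-κ * t) * d x t ≤ B' := by
    intro x t h1 h2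
    rcases le_or_gt 0 (d x t) with h3 | h3
    · calc Real.exp (-κ * t) * d x t ≤ 1 * d x t :=
        mul_le_mul_of_nonneg_right (hexp_le_one t h1) h3
      _ = d x t := one_mul _
      _ ≤ B' := hBd x t h1 h2
    · have : Real.exp (-κ * t) * d x t < 0 := mul_neg_of_pos_of_neg (Real.exp_pos _) h3
      linarith
  have hx₀R : ‖x₀‖ < R := by
    rcases lt_or_eq_of_le hx₀mem with h | h
    · exact h
    · exfalso
      have hPhi : Phi x₀ = R^2 := by rw [Phi_eq_norm_sq, h]
      have h2 := hexpd_le x₀ t₀ ht₀mem.1 ht₀mem.2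
      have h3 : 0 ≤ (2*(n:ℝ)*δ + δ) * t₀ := mul_nonneg hc2pos.le ht₀mem.1
      have h4 : 2*B' ≤ R^2 * δ := (div_le_iff₀ hδpos).1 hR2
      have h5 : ψ x₀ t₀ ≤ B' - δ * R^2 := by
        simp only [hψ]
        rw [hPhi]
        linarith
      have h6 : R^2 * δ = δ * R^2 := mul_comm _ _
      linarith
  have hd₀pos : 0 < d x₀ t₀ := by
    by_contra h
    push_neg at h
    have h1 : Real.exp (-κ * t₀) * d x₀ t₀ ≤ 0 := mul_nonpos_of_nonneg_of_nonpos (Real.exp_pos _).le h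
    have h2 : 0 ≤ δ * Phi x₀ + (2*(n:ℝ)*δ + δ) * t₀ :=
      add_nonneg (mul_nonneg hδpos.le (Phi_nonneg x₀)) (mul_nonneg hc2pos.le ht₀mem.1)
    simp only [hψ] at hψ0pos
    linarith
  -- time derivative inequality
  have hGder : HasDerivAt (fun t => ψ x₀ t)
      (Real.exp (-κ * t₀) * -κ * d x₀ t₀ + Real.exp (-κ * t₀) * deriv (d x₀) t₀ - (2*(n:ℝ)*δ + δ)) t₀ := by
    have h1 : HasDerivAt (fun t : ℝ => -κ * t) (-κ) t₀ := by
      simpa using (hasDerivAt_id t₀).const_mul (-κ)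
    have h2 : HasDerivAt (fun t : ℝ => Real.exp (-κ * t)) (Real.exp (-κ * t₀) * -κ) t₀ := h1.exp
    have h3 : HasDerivAt (d x₀) (deriv (d x₀) t₀) t₀ := (htd x₀ t₀ ht₀pos).hasDerivAt
    have h4 := h2.mul h3
    have h5 : HasDerivAt (fun t : ℝ => δ * Phi x₀ + (2*(n:ℝ)*δ + δ) * t) (2*(n:ℝ)*δ + δ) t₀ := by
      have := ((hasDerivAt_id t₀).const_mul (2*(n:ℝ)*δ + δ)).const_add (δ * Phi x₀)
      simpa using this
    have h6 := h4.sub h5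
    exact h6
  have htime : 0 ≤ Real.exp (-κ * t₀) * -κ * d x₀ t₀ + Real.exp (-κ * t₀) * deriv (d x₀) t₀
      - (2*(n:ℝ)*δ + δ) := by
    have hmem2 : ∀ t ∈ Icc (0:ℝ) T, ψ x₀ t ≤ ψ x₀ t₀ := by
      intro t htI
      exact hmax (x₀, t) ⟨by simpa only [Metric.mem_closedBall, dist_zero_right] using hx₀mem, htI⟩
    have := deriv_nonneg_of_isMaxOn ht₀pos ht₀mem.2 hGder.differentiableAt hmem2
    rwa [hGder.deriv] at this
  -- space: laplacian at max
  set F := fun y : E => ψ y t₀ with hF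
  have hF2 : ContDiff ℝ 2 F := by
    simp only [hF, hψ]
    exact (contDiff_const.mul (hcd t₀ ht₀pos)).sub
      ((contDiff_const.mul Phi_contDiff).add contDiff_const)
  have hlapF : lap F x₀ ≤ 0 := by
    unfold lap
    apply Finset.sum_nonpos
    intro i _
    set e := EuclideanSpace.single (𝕜 := ℝ) i (1:ℝ) with he
    have hne : ‖e‖ ≤ 1 := by
      rw [he, EuclideanSpace.norm_single]
      norm_num
    have hemax : IsLocalMax (fun s : ℝ => F (x₀ + s • e)) 0 := by
      have hr : 0 < R - ‖x₀‖ := by linarith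
      filter_upwards [Metric.ball_mem_nhds (0:ℝ) hr] with s hs
      rw [Metric.mem_ball, Real.dist_eq, sub_zero] at hs
      have hnorm : ‖x₀ + s • e‖ ≤ R := by
        calc ‖x₀ + s • e‖ ≤ ‖x₀‖ + ‖s • e‖ := norm_add_le _ _
        _ = ‖x₀‖ + |s| * ‖e‖ := by rw [norm_smul, Real.norm_eq_abs]
        _ ≤ ‖x₀‖ + |s| * 1 := by
            have h7 : 0 ≤ |s| := abs_nonneg s
            nlinarith
        _ ≤ R := by rw [mul_one]; linarith
      have hmem3 : ((x₀ + s • e, t₀) : E × ℝ) ∈ S :=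
        ⟨by simpa only [Metric.mem_closedBall, dist_zero_right] using hnorm, ht₀mem⟩
      have := hmax _ hmem3
      simpa using this
    exact second_deriv_test (slice_hasDerivAt (hF2.differentiable two_ne_zero) x₀ e)
      (second_slice hF2 x₀ e) hemax
  have hlapalg : lap F x₀ = Real.exp (-κ * t₀) * lap (fun y => d y t₀) x₀ - δ * (2*(n:ℝ)) := by
    have e0 : F = fun y => (Real.exp (-κ * t₀) * d y t₀)
        - (δ * Phi y + (2*(n:ℝ)*δ + δ) * t₀) := rfl
    rw [e0, lap_sub (contDiff_const.mul (hcd t₀ ht₀pos))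
      ((contDiff_const.mul Phi_contDiff).add contDiff_const),
      lap_const_mul (hcd t₀ ht₀pos),
      lap_add_const (contDiff_const.mul Phi_contDiff),
      lap_const_mul Phi_contDiff, lap_Phi]
  have hpde' := hineq x₀ t₀ ht₀pos hd₀pos.le
  have kpos := Real.exp_pos (-κ * t₀)
  have hmul := mul_le_mul_of_nonneg_left hpde' kpos.le
  rw [mul_sub] at hmul
  have hlapd : Real.exp (-κ * t₀) * lap (fun y => d y t₀) x₀ ≤ δ * (2*(n:ℝ)) := by
    rw [hlapalg] at hlapF
    linarith
  have e3 : Real.exp (-κ * t₀) * -κ * d x₀ t₀ + Real.exp (-κ * t₀) * (L' * d x₀ t₀)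
      = -(Real.exp (-κ * t₀) * d x₀ t₀) := by
    simp only [hκ]
    ring
  have hkd : 0 < Real.exp (-κ * t₀) * d x₀ t₀ := mul_pos kpos hd₀pos
  linarith

lemma g_int {g : ℝ → ℝ} (hgper : ∀ s, g (s + 1) = g s) (m : ℤ) (s : ℝ) :
    g (s + m) = g s := by
  have hper : Function.Periodic g 1 := hgper
  simpa using (hper.int_mul m) s

lemma comparison_pair (g : ℝ → ℝ) (L : NNReal) (ε' : ℝ) (hε' : 0 ≤ ε')
    (hLip : ∀ a b : ℝ, |g a - g b| ≤ (L:ℝ) * |a - b|)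
    (hgper : ∀ s, g (s + 1) = g s)
    (u1 u2 : E → ℝ → ℝ) (m : ℤ)
    (hc1 : ContinuousOn (fun q : E × ℝ => u1 q.1 q.2) {q | 0 ≤ q.2})
    (hc2 : ContinuousOn (fun q : E × ℝ => u2 q.1 q.2) {q | 0 ≤ q.2})
    (hx1 : ∀ t, 0 < t → ContDiff ℝ 2 fun x => u1 x t)
    (hx2 : ∀ t, 0 < t → ContDiff ℝ 2 fun x => u2 x t)
    (ht1 : ∀ x t, 0 < t → DifferentiableAt ℝ (u1 x) t)
    (ht2 : ∀ x t, 0 < t → DifferentiableAt ℝ (u2 x) t)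
    (hb12 : ∀ T, 0 < T → ∃ B, ∀ x t, 0 ≤ t → t ≤ T → u1 x t - u2 x t ≤ B)
    (hpde1 : ∀ x t, 0 < t → deriv (u1 x) t - lap (fun y => u1 y t) x = -(ε' * g (u1 x t)))
    (hpde2 : ∀ x t, 0 < t → deriv (u2 x) t - lap (fun y => u2 y t) x = -(ε' * g (u2 x t)))
    (h0 : ∀ x, u1 x 0 - m ≤ u2 x 0) :
    ∀ x t, 0 ≤ t → u1 x t - m ≤ u2 x t := by
  have key : ∀ x t, 0 ≤ t → u1 x t - (m:ℝ) - u2 x t ≤ 0 := by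
    apply comparison (fun x t => u1 x t - (m:ℝ) - u2 x t) (ε' * L)
      (by positivity)
    · exact (hc1.sub continuousOn_const).sub hc2
    · intro t ht
      exact ((hx1 t ht).sub contDiff_const).sub (hx2 t ht)
    · intro x t ht
      exact ((ht1 x t ht).sub_const _).sub (ht2 x t ht)
    · intro T hT
      obtain ⟨B, hB⟩ := hb12 T hT
      refine ⟨B + |(m:ℝ)|, fun x t h1 h2 => ?_⟩
      have := hB x t h1 h2
      have h3 : -(m:ℝ) ≤ |(m:ℝ)| := neg_le_abs _
      linarith
    · intro x
      have := h0 x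
      linarith
    · intro x t ht hd
      have hder : deriv (fun τ => u1 x τ - (m:ℝ) - u2 x τ) t
          = deriv (u1 x) t - deriv (u2 x) t := by
        rw [deriv_fun_sub ((ht1 x t ht).sub_const _) (ht2 x t ht), deriv_sub_const]
      have hlap : lap (fun y => u1 y t - (m:ℝ) - u2 y t) x
          = lap (fun y => u1 y t) x - lap (fun y => u2 y t) x := by
        rw [lap_sub ((hx1 t ht).sub contDiff_const) (hx2 t ht), lap_sub_const (hx1 t ht)]
      rw [hder, hlap]
      have e1 := hpde1 x t ht
      have e2 := hpde2 x t ht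
      set dd := u1 x t - (m:ℝ) - u2 x t with hdd
      have hg1 : g (u1 x t) = g (u2 x t + dd) := by
        have : u2 x t + dd = u1 x t - m := by rw [hdd]; ring
        rw [this]
        have := g_int hgper m (u1 x t - m)
        rw [show u1 x t - (m:ℝ) + (m:ℤ) = u1 x t by push_cast; ring] at this
        exact this
      have hLb := hLip (u2 x t) (u2 x t + dd)
      rw [show u2 x t - (u2 x t + dd) = -dd by ring, abs_neg, abs_of_nonneg hd] at hLb
      have hmul : ε' * (g (u2 x t) - g (u2 x t + dd)) ≤ ε' * ((L:ℝ) * dd) := by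
        apply mul_le_mul_of_nonneg_left _ hε'
        calc g (u2 x t) - g (u2 x t + dd) ≤ |g (u2 x t) - g (u2 x t + dd)| := le_abs_self _
        _ ≤ (L:ℝ) * dd := hLb
      have hexp : ε' * (g (u2 x t) - g (u2 x t + dd))
          = ε' * g (u2 x t) - ε' * g (u2 x t + dd) := by ring
      rw [hg1] at e1
      -- goal : D1 - D2 - (lap1 - lap2) ≤ ε' * L * dd
      have efin : ε' * ((L:ℝ) * dd) = ε' * (L:ℝ) * dd := by ring
      linarith
  intro x t htn
  have := key x t htn
  linarith

set_option maxHeartbeats 2000000 in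
theorem almost_planar_solutions
    (n : ℕ) (hn : 1 ≤ n) (α : ℝ) (hα : 0 ≤ α ∧ α < 1)
    (p : EuclideanSpace ℝ (Fin n))
    (g : ℝ → ℝ) (L : NNReal) (M : ℝ)
    (hgLip : LipschitzWith L g)
    (hgper : ∀ s, g (s + 1) = g s)
    (hgneg : ∀ s, g s ≤ 0)
    (hgM : ∀ s, |g s| ≤ M)
    (v : ℝ → EuclideanSpace ℝ (Fin n) → ℝ → ℝ)
    (hcont : ∀ ε, 0 < ε → ε ≤ 1 →
      ContinuousOn (fun q : EuclideanSpace ℝ (Fin n) × ℝ => v ε q.1 q.2) {q | 0 ≤ q.2})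
    (hx : ∀ ε, 0 < ε → ε ≤ 1 → ∀ t, 0 < t → ContDiff ℝ 2 fun x => v ε x t)
    (ht : ∀ ε, 0 < ε → ε ≤ 1 → ∀ x t, 0 < t → DifferentiableAt ℝ (v ε x) t)
    (hbdd : ∀ ε, 0 < ε → ε ≤ 1 → ∀ T, 0 < T → ∃ B, ∀ x t, 0 ≤ t → t ≤ T →
      |v ε x t - ∑ i, p i * x i| ≤ B ∧
      ‖fderiv ℝ (fun y => v ε y t - ∑ i, p i * y i) x‖ ≤ B)
    (hpde : ∀ ε, 0 < ε → ε ≤ 1 → ∀ x t, 0 < t →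
      deriv (v ε x) t - lap (fun y => v ε y t) x + ε ^ (1 - α) * g (v ε x t) = 0)
    (hinit : ∀ ε, 0 < ε → ε ≤ 1 → ∀ x, v ε x 0 = ∑ i, p i * x i) :
    ∃ ε₀ > 0, ∃ K > 0, ∀ ε, 0 < ε → ε ≤ ε₀ → ε ≤ 1 →
      ∃ c : ℝ,
        (∀ x t, 0 ≤ t → |v ε x t - ∑ i, p i * x i - c * t| ≤ K) ∧
        (∀ c' : ℝ, (∃ K', ∀ x t, 0 ≤ t → |v ε x t - ∑ i, p i * x i - c' * t| ≤ K') →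
          c' = c) ∧
        0 ≤ c ∧ c ≤ ε ^ (1 - α) * M ∧ ((∀ s, g s < 0) → 0 < c) := by
  refine ⟨1, one_pos, 4, by norm_num, ?_⟩
  intro ε hε0 _ hε1
  have hcV := hcont ε hε0 hε1
  have hxV := hx ε hε0 hε1
  have htV := ht ε hε0 hε1
  have hbV := hbdd ε hε0 hε1
  have hpdeV := hpde ε hε0 hε1
  have hinitV := hinit ε hε0 hε1
  set ε' := ε ^ (1 - α) with hε'
  have hε'pos : 0 < ε' := Real.rpow_pos_of_pos hε0 _
  have hMnn : 0 ≤ M := le_trans (abs_nonneg _) (hgM 0)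
  have hLip : ∀ a b : ℝ, |g a - g b| ≤ (L:ℝ) * |a - b| := by
    intro a b
    have := hgLip.dist_le_mul a b
    rwa [Real.dist_eq, Real.dist_eq] at this
  have hpdeV' : ∀ x t, 0 < t → deriv (v ε x) t - lap (fun y => v ε y t) x
      = -(ε' * g (v ε x t)) := by
    intro x t htp
    have := hpdeV x t htp
    linarith
  -- Step A: lower bound `v ≥ p·x`
  have vlow : ∀ x t, 0 ≤ t → (∑ i, p i * x i) ≤ v ε x t := by
    have key := comparison (fun x t => (∑ i, p i * x i) - v ε x t) 0 le_rfl
      ((((pform_contDiff p).continuous.comp continuous_fst).continuousOn).sub hcV)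
      (fun t htp => (pform_contDiff p).sub (hxV t htp))
      (fun x t htp => (differentiableAt_const _).sub (htV x t htp))
      (fun T hT => by
        obtain ⟨B, hB⟩ := hbV T hT
        exact ⟨B, fun x t h1 h2 => by
          beta_reduce
          have h3 := abs_le.1 (hB x t h1 h2).1
          linarith [h3.1]⟩)
      (fun x => by beta_reduce; rw [hinitV x]; simp)
      (fun x t htp hd => by
        beta_reduce at hd ⊢
        rw [deriv_const_sub, lap_sub (pform_contDiff p) (hxV t htp), lap_pform, zero_mul]
        have h1 := hpdeV' x t htp
        have h2 : ε' * g (v ε x t) ≤ 0 :=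
          mul_nonpos_iff.2 (Or.inl ⟨hε'pos.le, hgneg _⟩)
        linarith)
    intro x t htn
    have h := key x t htn
    beta_reduce at h
    linarith
  -- Step B: upper bound `v ≤ p·x + ε' M t`
  have vup : ∀ x t, 0 ≤ t → v ε x t ≤ (∑ i, p i * x i) + ε' * M * t := by
    have key := comparison (fun x t => v ε x t - ((∑ i, p i * x i) + ε' * M * t)) 0 le_rfl
      (hcV.sub (Continuous.continuousOn
        ((((pform_contDiff p).continuous.comp continuous_fst)).add
          (continuous_const.mul continuous_snd))))
      (fun t htp => (hxV t htp).sub ((pform_contDiff p).add contDiff_const))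
      (fun x t htp => (htV x t htp).sub
        ((differentiableAt_const _).add (differentiableAt_id.const_mul _)))
      (fun T hT => by
        obtain ⟨B, hB⟩ := hbV T hT
        exact ⟨B, fun x t h1 h2 => by
          beta_reduce
          have h3 := abs_le.1 (hB x t h1 h2).1
          have h4 : 0 ≤ ε' * M * t := by positivity
          linarith [h3.2]⟩)
      (fun x => by beta_reduce; rw [hinitV x]; simp)
      (fun x t htp hd => by
        beta_reduce at hd ⊢
        have haff : HasDerivAt (fun τ : ℝ => (∑ i, p i * x i) + ε' * M * τ) (ε' * M) t := by
          simpa using ((hasDerivAt_id t).const_mul (ε' * M)).const_add (∑ i, p i * x i)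
        rw [deriv_fun_sub (htV x t htp) haff.differentiableAt, haff.deriv,
          lap_sub (hxV t htp) ((pform_contDiff p).add contDiff_const),
          lap_add_const (pform_contDiff p), lap_pform, zero_mul]
        have h1 := hpdeV' x t htp
        have h2 : -g (v ε x t) ≤ M := le_trans (neg_le_abs _) (hgM _)
        have h3 : ε' * -g (v ε x t) ≤ ε' * M := mul_le_mul_of_nonneg_left h2 hε'pos.le
        have h4 : ε' * -g (v ε x t) = -(ε' * g (v ε x t)) := by ring
        linarith)
    intro x t htn
    have h := key x t htn
    beta_reduce at h
    linarith
  -- Step D: spatial almost-periodicity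
  have shiftD : ∀ (z : EuclideanSpace ℝ (Fin n)) x t, 0 ≤ t →
      v ε (x + z) t - (⌈∑ i, p i * z i⌉ : ℤ) ≤ v ε x t := by
    intro z
    apply comparison_pair g L ε' hε'pos.le hLip hgper
      (fun x t => v ε (x + z) t) (fun x t => v ε x t) ⌈∑ i, p i * z i⌉
      (hcV.comp ((continuous_fst.add continuous_const).prodMk continuous_snd).continuousOn
        (fun q hq => hq))
      hcV
      (fun t htp => (hxV t htp).comp (contDiff_id.add contDiff_const))
      hxV
      (fun x t htp => htV (x + z) t htp)
      htV
      (fun T hT => by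
        obtain ⟨B, hB⟩ := hbV T hT
        refine ⟨2 * B + |∑ i, p i * z i|, fun x t h1 h2 => ?_⟩
        beta_reduce
        have h3 := abs_le.1 (hB (x + z) t h1 h2).1
        have h4 := abs_le.1 (hB x t h1 h2).1
        have h5 := ell_add p x z
        have h6 : (∑ i, p i * z i) ≤ |∑ i, p i * z i| := le_abs_self _
        linarith [h3.2, h4.1])
      (fun x t htp => by
        beta_reduce
        rw [lap_comp_add (hxV t htp) z x]
        exact hpdeV' (x + z) t htp)
      (fun x t htp => hpdeV' x t htp)
      (fun x => by
        beta_reduce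
        rw [hinitV, hinitV, ell_add p x z]
        have := Int.le_ceil (∑ i, p i * z i)
        linarith)
  -- oscillation bound
  have oscil : ∀ x t, 0 ≤ t → |v ε x t - (∑ i, p i * x i) - v ε 0 t| ≤ 1 := by
    intro x t htn
    have h1 := shiftD x 0 t htn
    have h2 := shiftD (-x) x t htn
    rw [zero_add] at h1
    rw [show x + -x = (0 : EuclideanSpace ℝ (Fin n)) by abel] at h2
    rw [ell_neg] at h2
    have c1 : (⌈∑ i, p i * x i⌉ : ℝ) < (∑ i, p i * x i) + 1 := Int.ceil_lt_add_one _
    have c2 : (⌈-∑ i, p i * x i⌉ : ℝ) < -(∑ i, p i * x i) + 1 := Int.ceil_lt_add_one _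
    rw [abs_le]
    constructor
    · linarith
    · linarith
  -- φ properties
  have phinn : ∀ t, 0 ≤ t → 0 ≤ v ε 0 t := by
    intro t htn
    have := vlow 0 t htn
    rwa [ell_zero] at this
  have phiub : ∀ t, 0 ≤ t → v ε 0 t ≤ ε' * M * t := by
    intro t htn
    have := vup 0 t htn
    rwa [ell_zero, zero_add] at this
  -- Step E: approximate subadditivity (upper)
  have subup : ∀ s t : ℝ, 0 < s → 0 < t → v ε 0 (s + t) ≤ v ε 0 t + v ε 0 s + 2 := by
    intro s t hs htp
    have key := comparison_pair g L ε' hε'pos.le hLip hgper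
      (fun x t => v ε x (s + t)) (fun x t => v ε x t) ⌈v ε 0 s + 1⌉
      (hcV.comp (continuous_fst.prodMk (continuous_const.add continuous_snd)).continuousOn
        (fun q hq => by
          have : (0:ℝ) ≤ q.2 := hq
          show (0:ℝ) ≤ s + q.2
          linarith))
      hcV
      (fun t' ht' => hxV (s + t') (by linarith))
      hxV
      (fun x t' ht' => ((htV x (s + t') (by linarith)).hasDerivAt.comp_const_add
        s t').differentiableAt)
      htV
      (fun T hT => by
        obtain ⟨B, hB⟩ := hbV (s + T) (by linarith)
        refine ⟨2 * B, fun x t' h1 h2 => ?_⟩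
        beta_reduce
        have h3 := abs_le.1 (hB x (s + t') (by linarith) (by linarith)).1
        have h4 := abs_le.1 (hB x t' h1 (by linarith)).1
        linarith [h3.2, h4.1])
      (fun x t' ht' => by
        beta_reduce
        have hD : deriv (fun τ => v ε x (s + τ)) t' = deriv (v ε x) (s + t') := by
          rw [deriv_comp_const_add]
        rw [hD]
        exact hpdeV' x (s + t') (by linarith))
      (fun x t' ht' => hpdeV' x t' ht')
      (fun x => by
        beta_reduce
        rw [add_zero, hinitV]
        have h1 := abs_le.1 (oscil x s hs.le)
        have h2 := Int.le_ceil (v ε 0 s + 1)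
        linarith [h1.2])
    have h5 := key 0 t htp.le
    have h6 : (⌈v ε 0 s + 1⌉ : ℝ) < v ε 0 s + 2 := by
      have := Int.ceil_lt_add_one (v ε 0 s + 1)
      linarith
    linarith
  -- Step F: approximate superadditivity (lower)
  have sublo : ∀ s t : ℝ, 0 < s → 0 < t → v ε 0 t + v ε 0 s - 2 ≤ v ε 0 (s + t) := by
    intro s t hs htp
    have key := comparison_pair g L ε' hε'pos.le hLip hgper
      (fun x t => v ε x t) (fun x t => v ε x (s + t)) (-⌊v ε 0 s - 1⌋)
      hcV
      (hcV.comp (continuous_fst.prodMk (continuous_const.add continuous_snd)).continuousOn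
        (fun q hq => by
          have : (0:ℝ) ≤ q.2 := hq
          show (0:ℝ) ≤ s + q.2
          linarith))
      hxV
      (fun t' ht' => hxV (s + t') (by linarith))
      htV
      (fun x t' ht' => ((htV x (s + t') (by linarith)).hasDerivAt.comp_const_add
        s t').differentiableAt)
      (fun T hT => by
        obtain ⟨B, hB⟩ := hbV (s + T) (by linarith)
        refine ⟨2 * B, fun x t' h1 h2 => ?_⟩
        beta_reduce
        have h3 := abs_le.1 (hB x t' h1 (by linarith)).1
        have h4 := abs_le.1 (hB x (s + t') (by linarith) (by linarith)).1
        linarith [h3.2, h4.1])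
      (fun x t' ht' => hpdeV' x t' ht')
      (fun x t' ht' => by
        beta_reduce
        have hD : deriv (fun τ => v ε x (s + τ)) t' = deriv (v ε x) (s + t') := by
          rw [deriv_comp_const_add]
        rw [hD]
        exact hpdeV' x (s + t') (by linarith))
      (fun x => by
        beta_reduce
        rw [add_zero, hinitV]
        have h1 := abs_le.1 (oscil x s hs.le)
        have h2 := Int.floor_le (v ε 0 s - 1)
        push_cast
        linarith [h1.1])
    have h5 := key 0 t htp.le
    have h6 : v ε 0 s - 2 < (⌊v ε 0 s - 1⌋ : ℝ) := by
      have := Int.sub_one_lt_floor (v ε 0 s - 1)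
      linarith
    push_cast at h5
    linarith
  -- quasimorphism ⇒ existence of the slope c
  obtain ⟨c, hcnn, hcbd⟩ := quasi_linear (fun t => v ε 0 t) 2 (by norm_num)
    (fun s t hs htp => by
      have h1 := subup s t hs htp
      have h2 := sublo s t hs htp
      rw [abs_le]
      constructor <;> linarith)
    (fun t htp => phinn t htp.le)
  have hmain : ∀ x t, 0 ≤ t → |v ε x t - (∑ i, p i * x i) - c * t| ≤ 4 := by
    intro x t htn
    rcases eq_or_lt_of_le htn with h | h
    · rw [← h, hinitV, mul_zero]
      simp
    · have h1 := oscil x t htn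
      have h2 := hcbd t h
      have e : v ε x t - (∑ i, p i * x i) - c * t
          = (v ε x t - (∑ i, p i * x i) - v ε 0 t) + (v ε 0 t - c * t) := by ring
      rw [e]
      calc |(v ε x t - (∑ i, p i * x i) - v ε 0 t) + (v ε 0 t - c * t)|
          ≤ |v ε x t - (∑ i, p i * x i) - v ε 0 t| + |v ε 0 t - c * t| := abs_add_le _ _
      _ ≤ 1 + 2 := add_le_add h1 h2
      _ ≤ 4 := by norm_num
  refine ⟨c, hmain, ?_, hcnn, ?_, ?_⟩
  · -- uniqueness
    rintro c' ⟨K', hK'⟩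
    by_contra hne
    have habs : 0 < |c - c'| := abs_pos.2 (sub_ne_zero.2 fun h => hne h.symm)
    have hK'nn : 0 ≤ K' := le_trans (abs_nonneg _) (hK' 0 0 le_rfl)
    set τ := (K' + 5) / |c - c'| with hτ
    have hτnn : 0 ≤ τ := by positivity
    have h1 := hmain 0 τ hτnn
    have h2 := hK' 0 τ hτnn
    have h3 : |(c - c') * τ| ≤ K' + 4 := by
      have e : (c - c') * τ = (v ε 0 τ - (∑ i, p i * (0:EuclideanSpace ℝ (Fin n)) i) - c' * τ)
          - (v ε 0 τ - (∑ i, p i * (0:EuclideanSpace ℝ (Fin n)) i) - c * τ) := by ring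
      rw [e]
      calc |_ - _| ≤ |v ε 0 τ - (∑ i, p i * (0:EuclideanSpace ℝ (Fin n)) i) - c' * τ|
          + |v ε 0 τ - (∑ i, p i * (0:EuclideanSpace ℝ (Fin n)) i) - c * τ| := abs_sub _ _
      _ ≤ K' + 4 := add_le_add h2 h1
    have h4 : |(c - c') * τ| = K' + 5 := by
      have hne0 : |c - c'| ≠ 0 := ne_of_gt habs
      rw [abs_mul, abs_of_nonneg hτnn, hτ]
      field_simp
    linarith
  · -- upper bound on c
    by_contra hub
    push_neg at hub
    set β := c - ε' * M with hβ
    have hβpos : 0 < β := by simp only [hβ]; linarith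
    set t := 3 / β with htdef
    have htpos : 0 < t := by positivity
    have h1 := hcbd t htpos
    have h2 := phiub t htpos.le
    have h3 := abs_le.1 h1
    have h4 : β * t = 3 := by
      have hne0 : β ≠ 0 := ne_of_gt hβpos
      rw [htdef]
      field_simp
    -- c * t ≤ v ε 0 t + 2 ≤ ε' M t + 2, and c t - ε' M t = β t = 3
    have h5 : c * t = ε' * M * t + β * t := by rw [hβ]; ring
    linarith [h3.1]
  · -- positivity of c when g < 0 everywhere
    intro hgsneg
    have hgc : Continuous g := hgLip.continuous
    obtain ⟨s₀, hs₀mem, hs₀max⟩ := (isCompact_Icc (a := (0:ℝ)) (b := 1)).exists_isMaxOn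
      ⟨0, by norm_num, by norm_num⟩ hgc.continuousOn
    set δg := -g s₀ with hδgdef
    have hδgpos : 0 < δg := by
      have := hgsneg s₀
      simp only [hδgdef]
      linarith
    have hgle : ∀ s, g s ≤ -δg := by
      intro s
      have h1 : g (Int.fract s + (⌊s⌋ : ℤ)) = g (Int.fract s) := g_int hgper ⌊s⌋ (Int.fract s)
      rw [Int.fract_add_floor] at h1
      rw [h1]
      have h2 : Int.fract s ∈ Icc (0:ℝ) 1 := ⟨Int.fract_nonneg s, le_of_lt (Int.fract_lt_one s)⟩
      have h3 := hs₀max h2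
      simp only [hδgdef, neg_neg]
      exact h3
    have vlow2 : ∀ t, 0 ≤ t → ε' * δg * t ≤ v ε 0 t := by
      have key := comparison (fun x t => ((∑ i, p i * x i) + ε' * δg * t) - v ε x t) 0 le_rfl
        ((Continuous.continuousOn ((((pform_contDiff p).continuous.comp continuous_fst)).add
          (continuous_const.mul continuous_snd))).sub hcV)
        (fun t htp => ((pform_contDiff p).add contDiff_const).sub (hxV t htp))
        (fun x t htp => ((differentiableAt_const _).add
          (differentiableAt_id.const_mul _)).sub (htV x t htp))
        (fun T hT => by
          obtain ⟨B, hB⟩ := hbV T hT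
          refine ⟨ε' * δg * T + B, fun x t h1 h2 => ?_⟩
          beta_reduce
          have h3 := abs_le.1 (hB x t h1 h2).1
          have h4 : ε' * δg * t ≤ ε' * δg * T :=
            mul_le_mul_of_nonneg_left h2 (by positivity)
          linarith [h3.1])
        (fun x => by beta_reduce; rw [hinitV x]; simp)
        (fun x t htp hd => by
          beta_reduce at hd ⊢
          have haff : HasDerivAt (fun τ : ℝ => (∑ i, p i * x i) + ε' * δg * τ) (ε' * δg) t := by
            simpa using ((hasDerivAt_id t).const_mul (ε' * δg)).const_add (∑ i, p i * x i)
          rw [deriv_fun_sub haff.differentiableAt (htV x t htp), haff.deriv,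
            lap_sub ((pform_contDiff p).add contDiff_const) (hxV t htp),
            lap_add_const (pform_contDiff p), lap_pform, zero_mul]
          have h1 := hpdeV' x t htp
          have h2 : δg ≤ -g (v ε x t) := by linarith [hgle (v ε x t)]
          have h3 : ε' * δg ≤ ε' * -g (v ε x t) := mul_le_mul_of_nonneg_left h2 hε'pos.le
          have h4 : ε' * -g (v ε x t) = -(ε' * g (v ε x t)) := by ring
          linarith)
      intro t htn
      have h5 := key 0 t htn
      beta_reduce at h5
      rw [ell_zero] at h5
      linarith
    set t1 := 4 / (ε' * δg) with ht1def
    have ht1pos : 0 < t1 := by positivity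
    have h1 := abs_le.1 (hcbd t1 ht1pos)
    have h2 := vlow2 t1 ht1pos.le
    have h3 : ε' * δg * t1 = 4 := by
      rw [ht1def]
      field_simp
    have h4 : 2 ≤ c * t1 := by linarith [h1.1]
    by_contra hcle
    push_neg at hcle
    have h6 : c * t1 ≤ 0 := mul_nonpos_iff.2 (Or.inr ⟨hcle, ht1pos.le⟩)
    linarith
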